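/- (Peeling inequality.) Let $\Delta \in \mathbb{R}^{p \times q}$, let $S_u \subseteq \{1,\dots,p\}$ with $|S_u| = s_u$, and suppose the cone condition $\sum_{j \in S_u^c} \|\Delta_{j\cdot}\| \leq 3 \sum_{j \in S_u} \|\Delta_{j\cdot}\|$ holds. Let $t \geq 1$, let $J_1 \subseteq S_u^c$ be the indices of the $t$ rows of $\Delta$ in $S_u^c$ with largest Euclidean norm, and set $\widetilde{S}_u = S_u \cup J_1$. Partition $\widetilde S_u^c$ into sets $J_2,\dots,J_K$ of size at most $t$, where $J_k$ contains the indices of the $t$ largest remaining rows. Then $\sum_{k=2}^{K} \|\Delta_{J_k\cdot}\|_F \leq 3\sqrt{s_u/t}\; \|\Delta_{\widetilde S_u \cdot}\|_F$. -/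

import Mathlib

open Matrix BigOperators

/-- Squared Frobenius norm. -/
noncomputable def frobSq {m n : Type*} [Fintype m] [Fintype n] (A : Matrix m n ℝ) : ℝ :=
  ∑ i, ∑ j, (A i j) ^ 2

/-- Frobenius norm. -/
noncomputable def frob {m n : Type*} [Fintype m] [Fintype n] (A : Matrix m n ℝ) : ℝ :=
  Real.sqrt (frobSq A)

/-- ℓ2 → ℓ2 operator (spectral) norm of a matrix. -/
noncomputable def opNorm {m n : Type*} [Fintype m] [Fintype n] [DecidableEq n]
    (A : Matrix m n ℝ) : ℝ :=
  ‖LinearMap.toContinuousLinearMap (Matrix.toEuclideanLin A)‖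

/-- Smallest singular value of a square matrix (infimum of ‖Ax‖ over unit vectors). -/
noncomputable def sigmaMin {n : Type*} [Fintype n] [DecidableEq n] (A : Matrix n n ℝ) : ℝ :=
  ⨅ x : {x : EuclideanSpace ℝ n // ‖x‖ = 1}, ‖Matrix.toEuclideanLin A x‖

/-- Euclidean norm of a vector. -/
noncomputable def enorm {n : Type*} [Fintype n] (v : n → ℝ) : ℝ :=
  Real.sqrt (∑ i, (v i) ^ 2)

/-- Euclidean norm of row `j` of a matrix. -/
noncomputable def rowNorm {m n : Type*} [Fintype m] [Fintype n] (A : Matrix m n ℝ) (j : m) : ℝ :=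
  Real.sqrt (∑ i, (A j i) ^ 2)

/-- the peeling inequality. $J_1$ holds the $t$ largest rows (in Euclidean
norm) outside $S_u$, the sets $J_2,\dots,J_K$ partition the remaining indices in blocks of
the $t$ largest remaining rows, and the cone condition holds. -/
theorem stmt13 (p q su t K : ℕ)
    (Δ : Matrix (Fin p) (Fin q) ℝ) (Su : Finset (Fin p)) (J : ℕ → Finset (Fin p))
    (hSu : Su.card = su) (ht : 1 ≤ t) (hK : 1 ≤ K)
    (hcone : ∑ j ∈ Suᶜ, rowNorm Δ j ≤ 3 * ∑ j ∈ Su, rowNorm Δ j)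
    (hJ1sub : J 1 ⊆ Suᶜ) (hJ1card : (J 1).card = t)
    (hJ1top : ∀ j ∈ J 1, ∀ j' ∈ Suᶜ \ J 1, rowNorm Δ j' ≤ rowNorm Δ j)
    (hpart : (Finset.Icc 2 K).biUnion J = (Su ∪ J 1)ᶜ)
    (hdisj : ∀ k ∈ Finset.Icc 2 K, ∀ l ∈ Finset.Icc 2 K, k ≠ l → Disjoint (J k) (J l))
    (hcard : ∀ k, 1 ≤ k → k < K → (J k).card = t)
    (hcardK : (J K).card ≤ t)
    (horder : ∀ k l, 1 ≤ k → k < l → l ≤ K →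
      ∀ j ∈ J k, ∀ j' ∈ J l, rowNorm Δ j' ≤ rowNorm Δ j) :
    ∑ k ∈ Finset.Icc 2 K, Real.sqrt (∑ j ∈ J k, (rowNorm Δ j) ^ 2)
      ≤ 3 * Real.sqrt ((su : ℝ) / t) * Real.sqrt (∑ j ∈ Su ∪ J 1, (rowNorm Δ j) ^ 2) := by
  have htR : (1:ℝ) ≤ (t:ℝ) := by exact_mod_cast ht
  have htpos : (0:ℝ) < t := lt_of_lt_of_le one_pos htR
  have hst : (0:ℝ) < Real.sqrt t := Real.sqrt_pos.2 htpos
  have hrnn : ∀ j, 0 ≤ rowNorm Δ j := fun j => Real.sqrt_nonneg _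
  -- step 1 : block bound
  have step1 : ∀ k ∈ Finset.Icc 2 K,
      Real.sqrt (∑ j ∈ J k, (rowNorm Δ j)^2)
        ≤ (∑ j ∈ J (k-1), rowNorm Δ j) / Real.sqrt t := by
    intro k hk
    rw [Finset.mem_Icc] at hk
    obtain ⟨hk2, hkK⟩ := hk
    set S := ∑ j ∈ J (k-1), rowNorm Δ j with hS
    have hSnn : 0 ≤ S := Finset.sum_nonneg fun j _ => hrnn j
    have hbound : ∀ j ∈ J k, rowNorm Δ j ≤ S / t := by
      intro j hj
      have h1 : ∀ j' ∈ J (k-1), rowNorm Δ j ≤ rowNorm Δ j' := fun j' hj' =>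
        horder (k-1) k (by omega) (by omega) hkK j' hj' j hj
      have hcard' : (J (k-1)).card = t := hcard (k-1) (by omega) (by omega)
      have h2 : (t:ℝ) * rowNorm Δ j ≤ S := by
        calc (t:ℝ) * rowNorm Δ j = ∑ _j' ∈ J (k-1), rowNorm Δ j := by
              rw [Finset.sum_const, hcard', nsmul_eq_mul]
          _ ≤ S := Finset.sum_le_sum h1
      rw [le_div_iff₀ htpos]
      linarith
    have hcardk : (J k).card ≤ t := by
      rcases eq_or_lt_of_le hkK with h | h
      · rw [h]; exact hcardK
      · exact le_of_eq (hcard k (by omega) h)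
    have h2 : ∑ j ∈ J k, (rowNorm Δ j)^2 ≤ S^2 / t := by
      have : ∑ j ∈ J k, (rowNorm Δ j)^2 ≤ (t:ℝ) * (S/t)^2 := by
        calc ∑ j ∈ J k, (rowNorm Δ j)^2 ≤ ∑ _j ∈ J k, (S/t)^2 :=
              Finset.sum_le_sum fun j hj => pow_le_pow_left₀ (hrnn j) (hbound j hj) 2
          _ = ((J k).card : ℝ) * (S/t)^2 := by rw [Finset.sum_const, nsmul_eq_mul]
          _ ≤ (t:ℝ) * (S/t)^2 := by
              apply mul_le_mul_of_nonneg_right _ (sq_nonneg _)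
              exact_mod_cast hcardk
      calc ∑ j ∈ J k, (rowNorm Δ j)^2 ≤ (t:ℝ) * (S/t)^2 := this
        _ = S^2 / t := by field_simp
    calc Real.sqrt (∑ j ∈ J k, (rowNorm Δ j)^2) ≤ Real.sqrt (S^2 / t) :=
          Real.sqrt_le_sqrt h2
      _ = S / Real.sqrt t := by
          rw [Real.sqrt_div (sq_nonneg S), Real.sqrt_sq hSnn]
  -- reindex sum
  have hre : ∑ k ∈ Finset.Icc 2 K, (∑ j ∈ J (k-1), rowNorm Δ j)
      = ∑ k ∈ Finset.Icc 1 (K-1), ∑ j ∈ J k, rowNorm Δ j := by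
    apply Finset.sum_nbij' (i := fun k => k - 1) (j := fun k => k + 1)
    · intro a ha; simp only [Finset.mem_Icc] at *; omega
    · intro a ha; simp only [Finset.mem_Icc] at *; omega
    · intro a ha; simp only [Finset.mem_Icc] at ha; omega
    · intro a ha; simp only [Finset.mem_Icc] at ha; omega
    · intro a _; rfl
  -- sum over J_1 .. J_{K-1} bounded by sum over Suᶜ
  have hsubc : ∀ k, 2 ≤ k → k ≤ K → J k ⊆ (Su ∪ J 1)ᶜ := by
    intro k h2 hK'
    rw [← hpart]
    exact Finset.subset_biUnion_of_mem J (Finset.mem_Icc.2 ⟨h2, hK'⟩)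
  have hpd : (↑(Finset.Icc 1 (K-1)) : Set ℕ).PairwiseDisjoint J := by
    intro k hk l hl hkl
    simp only [Finset.coe_Icc, Set.mem_Icc] at hk hl
    rcases eq_or_lt_of_le hk.1 with h1 | h1
    · -- k = 1
      have hl2 : 2 ≤ l := by omega
      have : J l ⊆ (Su ∪ J 1)ᶜ := hsubc l hl2 (by omega)
      have : Disjoint (J 1) (J l) :=
        Finset.disjoint_left.2 fun a haj hal => by
          have := this hal
          simp only [Finset.mem_compl, Finset.mem_union] at this
          exact this (Or.inr haj)
      rw [← h1]; exact this
    · rcases eq_or_lt_of_le hl.1 with h2 | h2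
      · have hk2 : 2 ≤ k := by omega
        have : J k ⊆ (Su ∪ J 1)ᶜ := hsubc k hk2 (by omega)
        have : Disjoint (J k) (J 1) :=
          Finset.disjoint_left.2 fun a hak ha1 => by
            have := this hak
            simp only [Finset.mem_compl, Finset.mem_union] at this
            exact this (Or.inr ha1)
        rw [← h2]; exact this
      · exact hdisj k (Finset.mem_Icc.2 ⟨by omega, by omega⟩)
          l (Finset.mem_Icc.2 ⟨by omega, by omega⟩) hkl
  have hsum2 : ∑ k ∈ Finset.Icc 1 (K-1), ∑ j ∈ J k, rowNorm Δ j
      ≤ ∑ j ∈ Suᶜ, rowNorm Δ j := by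
    rw [← Finset.sum_biUnion hpd]
    apply Finset.sum_le_sum_of_subset_of_nonneg
    · intro a ha
      rw [Finset.mem_biUnion] at ha
      obtain ⟨k, hk, hak⟩ := ha
      rw [Finset.mem_Icc] at hk
      rcases eq_or_lt_of_le hk.1 with h1 | h1
      · rw [← h1] at hak; exact hJ1sub hak
      · have := hsubc k (by omega) (by omega) hak
        simp only [Finset.mem_compl, Finset.mem_union] at this ⊢
        exact fun h => this (Or.inl h)
    · exact fun j _ _ => hrnn j
  -- Cauchy-Schwarz on Su
  have hCS : ∑ j ∈ Su, rowNorm Δ j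
      ≤ Real.sqrt su * Real.sqrt (∑ j ∈ Su, (rowNorm Δ j)^2) := by
    have h1 : (∑ j ∈ Su, rowNorm Δ j)^2 ≤ (su:ℝ) * ∑ j ∈ Su, (rowNorm Δ j)^2 := by
      have := sq_sum_le_card_mul_sum_sq (s := Su) (f := fun j => rowNorm Δ j)
      rw [hSu] at this
      exact_mod_cast this
    have h2 : 0 ≤ ∑ j ∈ Su, rowNorm Δ j := Finset.sum_nonneg fun j _ => hrnn j
    calc ∑ j ∈ Su, rowNorm Δ j = Real.sqrt ((∑ j ∈ Su, rowNorm Δ j)^2) :=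
          (Real.sqrt_sq h2).symm
      _ ≤ Real.sqrt ((su:ℝ) * ∑ j ∈ Su, (rowNorm Δ j)^2) := Real.sqrt_le_sqrt h1
      _ = Real.sqrt su * Real.sqrt (∑ j ∈ Su, (rowNorm Δ j)^2) := Real.sqrt_mul (by positivity) _
  have hmono : Real.sqrt (∑ j ∈ Su, (rowNorm Δ j)^2)
      ≤ Real.sqrt (∑ j ∈ Su ∪ J 1, (rowNorm Δ j)^2) := by
    apply Real.sqrt_le_sqrt
    apply Finset.sum_le_sum_of_subset_of_nonneg Finset.subset_union_left
    exact fun j _ _ => sq_nonneg _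
  calc ∑ k ∈ Finset.Icc 2 K, Real.sqrt (∑ j ∈ J k, (rowNorm Δ j) ^ 2)
      ≤ ∑ k ∈ Finset.Icc 2 K, (∑ j ∈ J (k-1), rowNorm Δ j) / Real.sqrt t :=
        Finset.sum_le_sum step1
    _ = (∑ k ∈ Finset.Icc 1 (K-1), ∑ j ∈ J k, rowNorm Δ j) / Real.sqrt t := by
        rw [← Finset.sum_div, hre]
    _ ≤ (∑ j ∈ Suᶜ, rowNorm Δ j) / Real.sqrt t := by
        gcongr
    _ ≤ (3 * ∑ j ∈ Su, rowNorm Δ j) / Real.sqrt t := by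
        gcongr
    _ ≤ (3 * (Real.sqrt su * Real.sqrt (∑ j ∈ Su ∪ J 1, (rowNorm Δ j)^2))) / Real.sqrt t := by
        gcongr ?_ / _
        have := le_trans hCS (by
          exact mul_le_mul_of_nonneg_left hmono (Real.sqrt_nonneg _))
        linarith
    _ = 3 * Real.sqrt ((su : ℝ) / t) * Real.sqrt (∑ j ∈ Su ∪ J 1, (rowNorm Δ j) ^ 2) := by
        rw [Real.sqrt_div (by positivity : (0:ℝ) ≤ (su:ℝ))]
        field_simp
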